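/- Let δ ∈ (-1,0), α ∈ (0,∞), let n ≥ 1 be an integer and let x ∈ (0,∞). Then ∑_{k=0}^{n-1} ((-δ)_k / k!) γ(α+k,x)/x^{α+k} + ((-δ)_n/n!) γ(α+n,x)/x^{α+n} ≤ N(α,δ,x) ≤ ∑_{k=0}^{n-1} ((-δ)_k / k!) γ(α+k,x)/x^{α+k} + S_n(α,δ) γ(α+n,x)/x^{α+n}, where S_n(α,δ) := ((-δ)_{n-1}/(n-1)!) · ((α+n)/(δ+1) − (α+δ+1)/n). -/

import Mathlib

open MeasureTheory Real Filter

/-- The Pochhammer symbol `(a)_k = a (a+1) ⋯ (a+k-1)`, with `(a)_0 = 1`. -/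
noncomputable def poch (a : ℝ) : ℕ → ℝ
  | 0 => 1
  | k + 1 => poch a k * (a + k)

/-- The lower incomplete Gamma function `γ(ν,x) = ∫₀ˣ s^(ν-1) e^(-s) ds`. -/
noncomputable def lincGamma (ν x : ℝ) : ℝ := ∫ s in (0:ℝ)..x, s ^ (ν - 1) * Real.exp (-s)

/-- The reparametrized Kummer function `N(α,δ,x) = ∫₀¹ t^(α-1) (1-t)^δ e^(-xt) dt`. -/
noncomputable def NKummer (α δ x : ℝ) : ℝ :=
  ∫ t in (0:ℝ)..1, t ^ (α - 1) * (1 - t) ^ δ * Real.exp (-(x * t))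

lemma poch_succ (a : ℝ) (k : ℕ) : poch a (k + 1) = poch a k * (a + k) := rfl

lemma poch_shift (a : ℝ) (k : ℕ) : poch a (k + 1) = a * poch (a + 1) k := by
  induction k with
  | zero => simp [poch]
  | succ k ih =>
    rw [poch_succ, ih, poch_succ]
    push_cast
    ring

lemma poch_pos {a : ℝ} (ha : 0 < a) (k : ℕ) : 0 < poch a k := by
  induction k with
  | zero => norm_num [poch]
  | succ k ih => rw [poch_succ]; positivity

/-- coefficient  `poch μ k / k!` -/
noncomputable def pc (μ : ℝ) (k : ℕ) : ℝ := poch μ k / k.factorial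

lemma pc_zero (μ : ℝ) : pc μ 0 = 1 := by simp [pc, poch]

lemma pc_pos {μ : ℝ} (hμ : 0 < μ) (k : ℕ) : 0 < pc μ k := by
  have := poch_pos hμ k
  have h2 : (0:ℝ) < k.factorial := by positivity
  exact div_pos this h2

lemma pc_reindex (μ : ℝ) (k : ℕ) : ((k:ℝ) + 1) * pc μ (k + 1) = μ * pc (μ + 1) k := by
  have h : ((k+1).factorial : ℝ) = ((k:ℝ) + 1) * k.factorial := by
    rw [Nat.factorial_succ]; push_cast; ring
  rw [pc, pc, poch_shift, h]
  have hk : ((k:ℝ) + 1) ≠ 0 := by positivity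
  field_simp

/-- L1 : partial sums of the binomial series underestimate `(1-t)^μ` for `μ ≤ 0`. -/
lemma partial_sum_le (m : ℕ) : ∀ (μ : ℝ), μ ≤ 0 → ∀ t : ℝ, 0 ≤ t → t < 1 →
    ∑ k ∈ Finset.range m, pc (-μ) k * t ^ k ≤ (1 - t) ^ μ := by
  induction m with
  | zero =>
    intro μ hμ t ht ht1
    simp only [Finset.range_zero, Finset.sum_empty]
    exact Real.rpow_nonneg (by linarith) μ
  | succ m ih =>
    intro μ hμ t ht ht1
    set f : ℝ → ℝ := fun s =>
      (1 - s) ^ μ - ∑ k ∈ Finset.range (m + 1), pc (-μ) k * s ^ k with hf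
    have hf0 : f 0 = 0 := by
      simp [hf, Finset.sum_range_succ', pc_zero]
    have key : ∀ s ∈ Set.Ioo (0:ℝ) 1, HasDerivAt f
        ((-μ) * ((1 - s) ^ (μ - 1) -
          ∑ j ∈ Finset.range m, pc (-(μ-1)) j * s ^ j)) s := by
      intro s hs
      have h1s : (0:ℝ) < 1 - s := by simp only [Set.mem_Ioo] at hs; linarith [hs.2]
      have hd1 : HasDerivAt (fun s : ℝ => (1 - s) ^ μ) (μ * (1 - s) ^ (μ - 1) * (-1)) s := by
        have hb : HasDerivAt (fun s : ℝ => 1 - s) (-1) s := by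
          simpa using (hasDerivAt_id s).const_sub 1
        exact (Real.hasDerivAt_rpow_const (Or.inl h1s.ne')).comp s hb
      have hd2 : HasDerivAt (fun s : ℝ => ∑ k ∈ Finset.range (m + 1), pc (-μ) k * s ^ k)
          (∑ k ∈ Finset.range (m + 1), pc (-μ) k * ((k : ℝ) * s ^ (k - 1))) s := by
        exact HasDerivAt.fun_sum fun k _ => (hasDerivAt_pow k s).const_mul (pc (-μ) k)
      have := hd1.fun_sub hd2
      refine this.congr_deriv (Eq.symm ?_)
      have hre : ∑ k ∈ Finset.range (m + 1), pc (-μ) k * ((k : ℝ) * s ^ (k - 1))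
          = ∑ j ∈ Finset.range m, (-μ) * pc (-μ + 1) j * s ^ j := by
        rw [Finset.sum_range_succ']
        simp only [Nat.cast_zero, zero_mul, mul_zero, add_zero, Nat.cast_add, Nat.cast_one]
        apply Finset.sum_congr rfl
        intro j _
        have : pc (-μ) (j + 1) * (((j:ℝ) + 1) * s ^ (j + 1 - 1)) =
            (((j:ℝ) + 1) * pc (-μ) (j + 1)) * s ^ j := by
          simp only [Nat.add_sub_cancel]; ring
        rw [this, pc_reindex]
      rw [hre]
      have hμ1 : -(μ - 1) = -μ + 1 := by ring
      rw [hμ1, mul_sub, Finset.mul_sum]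
      simp only [mul_assoc]
      ring_nf
    have hmono : MonotoneOn f (Set.Ico (0:ℝ) 1) := by
      apply monotoneOn_of_hasDerivWithinAt_nonneg (convex_Ico 0 1)
      · -- continuity
        apply ContinuousOn.sub
        · intro s hs
          have h1s : (1:ℝ) - s ≠ 0 := by
            simp only [Set.mem_Ico] at hs; intro h; nlinarith [hs.2]
          exact ((Real.continuousAt_rpow_const _ _ (Or.inl h1s)).comp
            ((continuous_const.sub continuous_id).continuousAt)).continuousWithinAt
        · exact (continuous_finset_sum _ fun k _ =>
            continuous_const.mul (continuous_pow k)).continuousOn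
      · intro s hs
        rw [interior_Ico] at hs
        exact ((key s hs).hasDerivWithinAt)
      · intro s hs
        rw [interior_Ico] at hs
        have hIH := ih (μ - 1) (by linarith) s hs.1.le hs.2
        have : 0 ≤ (1 - s) ^ (μ - 1) - ∑ j ∈ Finset.range m, pc (-(μ-1)) j * s ^ j := by
          linarith
        have hμ' : 0 ≤ -μ := by linarith
        positivity
    have := hmono (Set.mem_Ico.mpr ⟨le_refl 0, one_pos⟩) (Set.mem_Ico.mpr ⟨ht, ht1⟩) ht
    rw [hf0] at this
    simpa [hf] using this

lemma pc_succ (μ : ℝ) (k : ℕ) : pc μ (k + 1) = pc μ k * (μ + k) / ((k:ℝ) + 1) := by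
  rw [pc, pc, poch_succ, Nat.factorial_succ]
  push_cast
  rw [div_mul_eq_mul_div, div_div, mul_comm ((k:ℝ) + 1) _]

/-- L2 : truncations of `1 - (1-t)^θ` from below for `0 < θ ≤ 1`. -/
lemma partial_sum_ge (m : ℕ) (θ : ℝ) (hθ : 0 < θ) (hθ1 : θ ≤ 1) :
    ∀ t ∈ Set.Icc (0:ℝ) 1,
      ∑ k ∈ Finset.range m, θ * pc (1 - θ) k / ((k:ℝ) + 1) * t ^ (k + 1) ≤ 1 - (1 - t) ^ θ := by
  set g : ℝ → ℝ := fun s =>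
    (1 - (1 - s) ^ θ) - ∑ k ∈ Finset.range m, θ * pc (1 - θ) k / ((k:ℝ) + 1) * s ^ (k + 1)
    with hg
  have hg0 : g 0 = 0 := by simp [hg]
  have hmono : MonotoneOn g (Set.Icc (0:ℝ) 1) := by
    apply monotoneOn_of_hasDerivWithinAt_nonneg (convex_Icc 0 1)
      (f' := fun s => θ * ((1 - s) ^ (θ - 1) -
        ∑ j ∈ Finset.range m, pc (1 - θ) j * s ^ j))
    · apply ContinuousOn.sub
      · apply ContinuousOn.sub continuousOn_const
        intro s _
        exact ((Real.continuousAt_rpow_const _ _ (Or.inr hθ.le)).comp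
          ((continuous_const.sub continuous_id).continuousAt)).continuousWithinAt
      · exact (continuous_finset_sum _ fun k _ =>
          continuous_const.mul (continuous_pow (k+1))).continuousOn
    · intro s hs
      rw [interior_Icc] at hs
      have h1s : (0:ℝ) < 1 - s := by linarith [hs.2]
      have hd1 : HasDerivAt (fun s : ℝ => 1 - (1 - s) ^ θ) (-(θ * (1 - s) ^ (θ - 1) * (-1))) s := by
        have hb : HasDerivAt (fun s : ℝ => 1 - s) (-1) s := by
          simpa using (hasDerivAt_id s).const_sub 1
        exact (((Real.hasDerivAt_rpow_const (p := θ) (Or.inl h1s.ne')).comp s hb).const_sub 1)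
      have hd2 : HasDerivAt
          (fun s : ℝ => ∑ k ∈ Finset.range m, θ * pc (1 - θ) k / ((k:ℝ) + 1) * s ^ (k + 1))
          (∑ k ∈ Finset.range m, θ * pc (1 - θ) k / ((k:ℝ) + 1) * (((k:ℝ) + 1) * s ^ k)) s := by
        apply HasDerivAt.fun_sum
        intro k _
        have := (hasDerivAt_pow (k+1) s).const_mul (θ * pc (1 - θ) k / ((k:ℝ) + 1))
        simpa using this
      apply HasDerivAt.hasDerivWithinAt
      have := hd1.fun_sub hd2
      convert this using 1
      rw [mul_sub, Finset.mul_sum]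
      have : ∀ k ∈ Finset.range m,
          θ * pc (1 - θ) k / ((k:ℝ) + 1) * (((k:ℝ) + 1) * s ^ k)
            = θ * (pc (1 - θ) k * s ^ k) := by
        intro k _
        have hk : ((k:ℝ) + 1) ≠ 0 := by positivity
        field_simp
      rw [Finset.sum_congr rfl this]
      ring
    · intro s hs
      rw [interior_Icc] at hs
      have hIH := partial_sum_le m (θ - 1) (by linarith) s hs.1.le hs.2
      have hrw : -(θ - 1) = 1 - θ := by ring
      rw [hrw] at hIH
      have : 0 ≤ (1 - s) ^ (θ - 1) - ∑ j ∈ Finset.range m, pc (1 - θ) j * s ^ j := by linarith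
      positivity
  intro t ht
  have := hmono (Set.mem_Icc.mpr ⟨le_refl 0, zero_le_one⟩) ht ht.1
  rw [hg0] at this
  simpa [hg] using this

lemma remainder_step (δ : ℝ) (hδ₁ : -1 < δ) (hδ₂ : δ < 0) (m : ℕ) {t : ℝ}
    (ht : 0 ≤ t) (ht1 : t ≤ 1) :
    (1 - t) ^ δ - ∑ k ∈ Finset.range (m + 1), pc (-δ) k * t ^ k ≤
      t * ((1 - t) ^ δ - ∑ k ∈ Finset.range m, pc (-δ) k * t ^ k) := by
  have hθ : (0:ℝ) < δ + 1 := by linarith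
  have hPQ : (∑ k ∈ Finset.range (m + 1), pc (-δ) k * t ^ k)
      - t * ∑ k ∈ Finset.range m, pc (-δ) k * t ^ k
      = 1 - ∑ k ∈ Finset.range m, (δ + 1) * pc (-δ) k / ((k:ℝ) + 1) * t ^ (k + 1) := by
    rw [Finset.sum_range_succ', Finset.mul_sum]
    simp only [pc_zero, pow_zero, mul_one]
    have hterm : ∑ k ∈ Finset.range m, pc (-δ) (k+1) * t^(k+1)
        - ∑ i ∈ Finset.range m, t * (pc (-δ) i * t^i)
        = - ∑ k ∈ Finset.range m, (δ+1) * pc (-δ) k/((k:ℝ)+1) * t^(k+1) := by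
      rw [← Finset.sum_sub_distrib, ← Finset.sum_neg_distrib]
      apply Finset.sum_congr rfl
      intro k _
      rw [pc_succ]
      have hk : ((k:ℝ)+1) ≠ 0 := by positivity
      field_simp
      ring
    linarith [hterm]
  have hL2 := partial_sum_ge m (δ + 1) hθ (by linarith) t ⟨ht, ht1⟩
  have hco : ∀ k ∈ Finset.range m,
      (δ + 1) * pc (1 - (δ + 1)) k / ((k:ℝ) + 1) * t ^ (k + 1)
        = (δ + 1) * pc (-δ) k / ((k:ℝ) + 1) * t ^ (k + 1) := by
    intro k _
    norm_num
  rw [Finset.sum_congr rfl hco] at hL2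
  have hpow : (1 - t) ^ (δ + 1) = (1 - t) ^ δ * (1 - t) := by
    rcases eq_or_lt_of_le ht1 with h | h
    · subst h
      simp [Real.zero_rpow hθ.ne']
    · rw [Real.rpow_add (by linarith : (0:ℝ) < 1 - t), Real.rpow_one]
  nlinarith [hL2, hPQ, hpow]

lemma remainder_bound (δ : ℝ) (hδ₁ : -1 < δ) (hδ₂ : δ < 0) (m : ℕ) {t : ℝ}
    (ht : 0 ≤ t) (ht1 : t ≤ 1) :
    (1 - t) ^ δ ≤ (∑ k ∈ Finset.range (m + 1), pc (-δ) k * t ^ k) + t ^ m * (1 - t) ^ δ := by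
  have key : ∀ m : ℕ, (1 - t) ^ δ - ∑ k ∈ Finset.range (m + 1), pc (-δ) k * t ^ k ≤
      t ^ m * ((1 - t) ^ δ - 1) := by
    intro m
    induction m with
    | zero => simp [pc_zero]
    | succ m ih =>
      have h1 := remainder_step δ hδ₁ hδ₂ (m + 1) ht ht1
      have h2 : t * ((1 - t) ^ δ - ∑ k ∈ Finset.range (m + 1), pc (-δ) k * t ^ k)
          ≤ t * (t ^ m * ((1 - t) ^ δ - 1)) := mul_le_mul_of_nonneg_left ih ht
      calc (1 - t) ^ δ - ∑ k ∈ Finset.range (m + 2), pc (-δ) k * t ^ k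
          ≤ t * (t ^ m * ((1 - t) ^ δ - 1)) := le_trans h1 h2
        _ = t ^ (m + 1) * ((1 - t) ^ δ - 1) := by ring
  have h := key m
  have h2 : t ^ m * ((1 - t) ^ δ - 1) ≤ t ^ m * (1 - t) ^ δ := by
    have : (1 - t) ^ δ - 1 ≤ (1 - t) ^ δ := by linarith
    have htm : (0:ℝ) ≤ t ^ m := pow_nonneg ht m
    exact mul_le_mul_of_nonneg_left this htm
  linarith


section P2
variable (α δ x : ℝ)

lemma cont_rpow {c : ℝ} (hc : 0 ≤ c) : Continuous fun t : ℝ => t ^ c :=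
  continuous_iff_continuousAt.mpr fun t => Real.continuousAt_rpow_const t c (Or.inr hc)

lemma beta_integrable {u v : ℝ} (hu : 0 < u) (hv : 0 < v) :
    IntegrableOn (fun t : ℝ => t ^ (u - 1) * (1 - t) ^ (v - 1)) (Set.Ioo (0:ℝ) 1) := by
  have B := Complex.betaIntegral_convergent (u := (u:ℂ)) (v := (v:ℂ)) (by simpa) (by simpa)
  rw [intervalIntegrable_iff] at B
  have B2 := B.norm
  have hsub : Set.Ioo (0:ℝ) 1 ⊆ Set.uIoc (0:ℝ) 1 := by
    rw [Set.uIoc_of_le zero_le_one]; exact Set.Ioo_subset_Ioc_self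
  have B3 := MeasureTheory.IntegrableOn.mono_set B2 hsub
  apply B3.congr_fun ?_ measurableSet_Ioo
  intro t ht
  have ht0 : 0 < t := ht.1
  have ht1 : 0 < 1 - t := by linarith [ht.2]
  have e1 : ‖(t:ℂ) ^ ((u:ℂ) - 1)‖ = t ^ (u - 1) := by
    rw [Complex.norm_cpow_eq_rpow_re_of_pos ht0]
    norm_num
  have e2 : ‖(1 - (t:ℂ)) ^ ((v:ℂ) - 1)‖ = (1 - t) ^ (v - 1) := by
    have : (1 - (t:ℂ)) = (((1 - t : ℝ)):ℂ) := by push_cast; ring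
    rw [this, Complex.norm_cpow_eq_rpow_re_of_pos ht1]
    norm_num
  simp only [norm_mul, e1, e2]

lemma integrableOn_of_le_h (hα : 0 < α) (hδ₁ : -1 < δ)
    {f : ℝ → ℝ} (hm : AEStronglyMeasurable f (volume.restrict (Set.Ioo (0:ℝ) 1)))
    (hb : ∀ t ∈ Set.Ioo (0:ℝ) 1, |f t| ≤ t ^ (α - 1) * (1 - t) ^ δ) :
    IntegrableOn f (Set.Ioo (0:ℝ) 1) := by
  have h := beta_integrable (u := α) (v := δ + 1) hα (by linarith)
  have h' : IntegrableOn (fun t : ℝ => t ^ (α - 1) * (1 - t) ^ δ) (Set.Ioo (0:ℝ) 1) := by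
    simpa using h
  apply Integrable.mono' h' hm
  rw [ae_restrict_iff' measurableSet_Ioo]
  exact ae_of_all _ fun t ht => by rw [Real.norm_eq_abs]; exact hb t ht

lemma one_le_one_sub_rpow (hδ : δ ≤ 0) {t : ℝ} (ht : t ∈ Set.Ioo (0:ℝ) 1) :
    1 ≤ (1 - t) ^ δ :=
  Real.one_le_rpow_of_pos_of_le_one_of_nonpos (by linarith [ht.2]) (by linarith [ht.1]) hδ

lemma exp_le_one' {x t : ℝ} (hx : 0 ≤ x) (ht : 0 ≤ t) : Real.exp (-(x * t)) ≤ 1 :=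
  Real.exp_le_one_iff.mpr (neg_nonpos.mpr (by positivity))

/-- integrability of `t^(ν-1) e^{-xt}` on `(0,1)` for `ν ≥ α`. -/
lemma Iv_integrable (hα : 0 < α) (hδ₁ : -1 < δ) (hδ₂ : δ < 0) (hx : 0 < x)
    {ν : ℝ} (hν : α ≤ ν) :
    IntegrableOn (fun t : ℝ => t ^ (ν - 1) * Real.exp (-(x * t))) (Set.Ioo (0:ℝ) 1) := by
  apply integrableOn_of_le_h α δ hα hδ₁
  · apply ContinuousOn.aestronglyMeasurable ?_ measurableSet_Ioo
    apply ContinuousOn.mul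
    · intro t ht
      exact (Real.continuousAt_rpow_const t _ (Or.inl (ne_of_gt ht.1))).continuousWithinAt
    · exact (Real.continuous_exp.comp (continuous_const.mul continuous_id).neg).continuousOn
  · intro t ht
    have ht0 : 0 < t := ht.1
    have ht1 : t < 1 := ht.2
    have h1 : t ^ (ν - 1) ≤ t ^ (α - 1) :=
      Real.rpow_le_rpow_of_exponent_ge ht0 ht1.le (by linarith)
    have h2 : Real.exp (-(x * t)) ≤ 1 := exp_le_one' hx.le ht0.le
    have h3 : (1:ℝ) ≤ (1 - t) ^ δ := one_le_one_sub_rpow δ hδ₂.le ht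
    rw [abs_of_nonneg (by positivity)]
    calc t ^ (ν - 1) * Real.exp (-(x * t)) ≤ t ^ (α - 1) * 1 :=
          mul_le_mul h1 h2 (by positivity) (by positivity)
      _ ≤ t ^ (α - 1) * (1 - t) ^ δ := by
          rw [mul_one]
          exact le_mul_of_one_le_right (Real.rpow_nonneg ht0.le (α - 1)) h3

noncomputable def Iv (x ν : ℝ) : ℝ :=
  ∫ t in Set.Ioo (0:ℝ) 1, t ^ (ν - 1) * Real.exp (-(x * t))

lemma Iv_nonneg (x ν : ℝ) : 0 ≤ Iv x ν := by
  apply setIntegral_nonneg measurableSet_Ioo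
  intro t ht
  exact mul_nonneg (Real.rpow_nonneg ht.1.le _) (Real.exp_nonneg _)

lemma Iv_anti (hα : 0 < α) (hδ₁ : -1 < δ) (hδ₂ : δ < 0) (hx : 0 < x)
    {ν ν' : ℝ} (hν : α ≤ ν) (hνν' : ν ≤ ν') : Iv x ν' ≤ Iv x ν := by
  apply setIntegral_mono_on (Iv_integrable α δ x hα hδ₁ hδ₂ hx (le_trans hν hνν'))
    (Iv_integrable α δ x hα hδ₁ hδ₂ hx hν) measurableSet_Ioo
  intro t ht
  have h1 : t ^ (ν' - 1) ≤ t ^ (ν - 1) :=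
    Real.rpow_le_rpow_of_exponent_ge ht.1 ht.2.le (by linarith)
  exact mul_le_mul_of_nonneg_right h1 (Real.exp_nonneg _)

lemma interval_to_Ioo (f : ℝ → ℝ) :
    (∫ t in (0:ℝ)..1, f t) = ∫ t in Set.Ioo (0:ℝ) 1, f t := by
  rw [intervalIntegral.integral_of_le zero_le_one, integral_Ioc_eq_integral_Ioo]

lemma NKummer_eq :
    NKummer α δ x = ∫ t in Set.Ioo (0:ℝ) 1, t ^ (α - 1) * (1 - t) ^ δ * Real.exp (-(x * t)) := by
  rw [NKummer, interval_to_Ioo]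

lemma lincGamma_eq (hx : 0 < x) {ν : ℝ} (hν : 0 < ν) :
    lincGamma ν x / x ^ ν = Iv x ν := by
  have hxne : x ≠ 0 := hx.ne'
  have key : x • ∫ t in (0:ℝ)..1, ((x * t) ^ (ν - 1) * Real.exp (-(x * t)))
      = lincGamma ν x := by
    have := intervalIntegral.smul_integral_comp_mul_left
      (fun s => s ^ (ν - 1) * Real.exp (-s)) (a := 0) (b := 1) x
    simpa [lincGamma] using this
  have congr1 : (∫ t in (0:ℝ)..1, ((x * t) ^ (ν - 1) * Real.exp (-(x * t))))
      = ∫ t in (0:ℝ)..1, x ^ (ν - 1) * (t ^ (ν - 1) * Real.exp (-(x * t))) := by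
    apply intervalIntegral.integral_congr
    intro t ht
    rw [Set.uIcc_of_le zero_le_one, Set.mem_Icc] at ht
    simp only
    rw [Real.mul_rpow hx.le ht.1]
    ring
  rw [congr1, intervalIntegral.integral_const_mul, interval_to_Ioo] at key
  have hxν : x ^ ν = x * x ^ (ν - 1) := by
    conv_lhs => rw [show ν = 1 + (ν - 1) by ring]
    rw [Real.rpow_add hx, Real.rpow_one]
  rw [← key, hxν]
  have h1 : x ^ (ν - 1) ≠ 0 := by positivity
  rw [smul_eq_mul, Iv]
  field_simp

lemma Iv_ftc (hx : 0 < x) {ν : ℝ} (hν : 1 ≤ ν) :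
    ν * Iv x ν = Real.exp (-x) + x * Iv x (ν + 1) := by
  have hν0 : (0:ℝ) < ν := by linarith
  set F : ℝ → ℝ := fun t => t ^ ν * Real.exp (-(x * t)) with hF
  set F' : ℝ → ℝ := fun t =>
    ν * (t ^ (ν - 1) * Real.exp (-(x * t))) - x * (t ^ ν * Real.exp (-(x * t))) with hF'
  have hderiv : ∀ t ∈ Set.uIcc (0:ℝ) 1, HasDerivAt F (F' t) t := by
    intro t _
    have h1 : HasDerivAt (fun t : ℝ => t ^ ν) (ν * t ^ (ν - 1)) t :=
      Real.hasDerivAt_rpow_const (Or.inr hν)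
    have h2 : HasDerivAt (fun t : ℝ => -(x * t)) (-x) t := by
      simpa using ((hasDerivAt_id t).const_mul x).fun_neg
    have h3 : HasDerivAt (fun t : ℝ => Real.exp (-(x * t)))
        (Real.exp (-(x * t)) * (-x)) t := h2.exp
    have := h1.fun_mul h3
    refine this.congr_deriv (Eq.symm ?_)
    simp only [hF']
    ring
  have hcont1 : Continuous fun t : ℝ => t ^ (ν - 1) * Real.exp (-(x * t)) :=
    (cont_rpow (by linarith)).mul
      (Real.continuous_exp.comp (continuous_const.mul continuous_id).neg)
  have hcont2 : Continuous fun t : ℝ => t ^ ν * Real.exp (-(x * t)) :=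
    (cont_rpow (by linarith)).mul
      (Real.continuous_exp.comp (continuous_const.mul continuous_id).neg)
  have hint : IntervalIntegrable F' volume 0 1 := by
    apply IntervalIntegrable.sub
    · exact ((continuous_const.mul hcont1).intervalIntegrable 0 1)
    · exact ((continuous_const.mul hcont2).intervalIntegrable 0 1)
  have hftc := intervalIntegral.integral_eq_sub_of_hasDerivAt hderiv hint
  have hF1 : F 1 = Real.exp (-x) := by
    simp [hF, Real.one_rpow]
  have hF0 : F 0 = 0 := by
    simp [hF, Real.zero_rpow hν0.ne']
  rw [hF1, hF0, sub_zero] at hftc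
  have hsplit : (∫ t in (0:ℝ)..1, F' t)
      = ν * (∫ t in Set.Ioo (0:ℝ) 1, (t ^ (ν - 1) * Real.exp (-(x * t))))
        - x * (∫ t in Set.Ioo (0:ℝ) 1, (t ^ ν * Real.exp (-(x * t)))) := by
    rw [show F' = fun t => ν * (t ^ (ν - 1) * Real.exp (-(x * t)))
        - x * (t ^ ν * Real.exp (-(x * t))) from rfl]
    rw [intervalIntegral.integral_sub ((continuous_const.fun_mul hcont1).intervalIntegrable 0 1)
      ((continuous_const.fun_mul hcont2).intervalIntegrable 0 1),
      intervalIntegral.integral_const_mul, intervalIntegral.integral_const_mul,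
      interval_to_Ioo, interval_to_Ioo]
  rw [hsplit] at hftc
  have hIv1 : Iv x ν = ∫ t in Set.Ioo (0:ℝ) 1, (t ^ (ν - 1) * Real.exp (-(x * t))) := rfl
  have hIv2 : Iv x (ν + 1) = ∫ t in Set.Ioo (0:ℝ) 1, (t ^ ν * Real.exp (-(x * t))) := by
    rw [Iv, add_sub_cancel_right]
  rw [hIv1, hIv2]
  linarith [hftc]
end P2

section P3
variable (α δ x : ℝ)

lemma h_integrable (hα : 0 < α) (hδ₁ : -1 < δ) :
    IntegrableOn (fun t : ℝ => t ^ (α - 1) * (1 - t) ^ δ) (Set.Ioo (0:ℝ) 1) := by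
  simpa using beta_integrable (u := α) (v := δ + 1) hα (by linarith)

lemma NI_contOn :
    ContinuousOn (fun t : ℝ => t ^ (α - 1) * (1 - t) ^ δ * Real.exp (-(x * t)))
      (Set.Ioo (0:ℝ) 1) := by
  apply ContinuousOn.mul
  apply ContinuousOn.mul
  · intro t ht
    exact (Real.continuousAt_rpow_const t _ (Or.inl (ne_of_gt ht.1))).continuousWithinAt
  · intro t ht
    have h1t : (1:ℝ) - t ≠ 0 := by have := ht.2; intro h; simp only [Set.mem_Ioo] at ht; linarith
    exact ((Real.continuousAt_rpow_const _ _ (Or.inl h1t)).comp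
      ((continuous_const.sub continuous_id).continuousAt)).continuousWithinAt
  · exact (Real.continuous_exp.comp (continuous_const.mul continuous_id).neg).continuousOn

lemma NI_integrable (hα : 0 < α) (hδ₁ : -1 < δ) (hδ₂ : δ < 0) (hx : 0 < x) (m : ℕ) :
    IntegrableOn (fun t : ℝ => t ^ m * (t ^ (α - 1) * (1 - t) ^ δ * Real.exp (-(x * t))))
      (Set.Ioo (0:ℝ) 1) := by
  apply integrableOn_of_le_h α δ hα hδ₁
  · exact (((continuous_pow m).continuousOn).mul (NI_contOn α δ x)).aestronglyMeasurable
      measurableSet_Ioo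
  · intro t ht
    have ht0 : 0 < t := ht.1
    have ht1 : t < 1 := ht.2
    have h0 : (0:ℝ) ≤ t ^ (α - 1) * (1 - t) ^ δ := by
      have : (0:ℝ) ≤ 1 - t := by linarith
      positivity
    have hb : t ^ m * Real.exp (-(x * t)) ≤ 1 :=
      mul_le_one₀ (pow_le_one₀ ht0.le ht1.le) (Real.exp_nonneg _) (exp_le_one' hx.le ht0.le)
    rw [abs_of_nonneg (mul_nonneg (pow_nonneg ht0.le m)
      (mul_nonneg h0 (Real.exp_nonneg _)))]
    calc t ^ m * (t ^ (α - 1) * (1 - t) ^ δ * Real.exp (-(x * t)))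
        = (t ^ m * Real.exp (-(x * t))) * (t ^ (α - 1) * (1 - t) ^ δ) := by ring
      _ ≤ 1 * (t ^ (α - 1) * (1 - t) ^ δ) := mul_le_mul_of_nonneg_right hb h0
      _ = t ^ (α - 1) * (1 - t) ^ δ := one_mul _

lemma sum_swap (hα : 0 < α) (hδ₁ : -1 < δ) (hδ₂ : δ < 0) (hx : 0 < x) (M : ℕ) :
    (∫ t in Set.Ioo (0:ℝ) 1,
        ∑ k ∈ Finset.range M, pc (-δ) k * (t ^ (α + (k:ℝ) - 1) * Real.exp (-(x * t))))
      = ∑ k ∈ Finset.range M, pc (-δ) k * Iv x (α + k) := by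
  rw [MeasureTheory.integral_finset_sum]
  · exact Finset.sum_congr rfl fun k _ => by
      rw [MeasureTheory.integral_const_mul]; rfl
  · intro k _
    exact (Iv_integrable α δ x hα hδ₁ hδ₂ hx
      (le_add_of_nonneg_right (Nat.cast_nonneg k))).const_mul _

lemma term_factor {t : ℝ} (ht : 0 < t) (k : ℕ) :
    t ^ (α + (k:ℝ) - 1) = t ^ (α - 1) * t ^ k := by
  have : α + (k:ℝ) - 1 = (α - 1) + (k:ℝ) := by ring
  rw [this, Real.rpow_add ht, Real.rpow_natCast]

lemma lower_int (hα : 0 < α) (hδ₁ : -1 < δ) (hδ₂ : δ < 0) (hx : 0 < x) (M : ℕ) :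
    (∑ k ∈ Finset.range M, pc (-δ) k * Iv x (α + k)) ≤ NKummer α δ x := by
  rw [NKummer_eq, ← sum_swap α δ x hα hδ₁ hδ₂ hx M]
  apply setIntegral_mono_on
  · exact MeasureTheory.integrable_finset_sum _ fun k _ =>
      (Iv_integrable α δ x hα hδ₁ hδ₂ hx
        (le_add_of_nonneg_right (Nat.cast_nonneg k))).const_mul _
  · apply integrableOn_of_le_h α δ hα hδ₁
    · exact (NI_contOn α δ x).aestronglyMeasurable measurableSet_Ioo
    · intro t ht
      have ht0 := ht.1; have ht1 := ht.2
      have h1t : (0:ℝ) ≤ 1 - t := by linarith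
      rw [abs_of_nonneg (by positivity)]
      calc t ^ (α - 1) * (1 - t) ^ δ * Real.exp (-(x * t))
          ≤ t ^ (α - 1) * (1 - t) ^ δ * 1 :=
            mul_le_mul_of_nonneg_left (exp_le_one' hx.le ht0.le) (by positivity)
        _ = t ^ (α - 1) * (1 - t) ^ δ := mul_one _
  · exact measurableSet_Ioo
  · intro t ht
    have ht0 := ht.1
    have hsum : ∑ k ∈ Finset.range M, pc (-δ) k * (t ^ (α + (k:ℝ) - 1) * Real.exp (-(x * t)))
        = (t ^ (α - 1) * Real.exp (-(x * t))) * ∑ k ∈ Finset.range M, pc (-δ) k * t ^ k := by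
      rw [Finset.mul_sum]
      refine Finset.sum_congr rfl fun k _ => ?_
      rw [term_factor α ht0 k]
      ring
    rw [hsum]
    calc (t ^ (α - 1) * Real.exp (-(x * t))) * ∑ k ∈ Finset.range M, pc (-δ) k * t ^ k
        ≤ (t ^ (α - 1) * Real.exp (-(x * t))) * (1 - t) ^ δ :=
          mul_le_mul_of_nonneg_left (partial_sum_le M δ hδ₂.le t ht0.le ht.2) (by positivity)
      _ = t ^ (α - 1) * (1 - t) ^ δ * Real.exp (-(x * t)) := by ring

lemma upper_int (hα : 0 < α) (hδ₁ : -1 < δ) (hδ₂ : δ < 0) (hx : 0 < x) (m : ℕ) :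
    NKummer α δ x ≤ (∑ k ∈ Finset.range (m + 1), pc (-δ) k * Iv x (α + k))
      + ∫ t in Set.Ioo (0:ℝ) 1, t ^ m * (t ^ (α - 1) * (1 - t) ^ δ * Real.exp (-(x * t))) := by
  have hsumint : IntegrableOn
      (fun t : ℝ => ∑ k ∈ Finset.range (m + 1),
        pc (-δ) k * (t ^ (α + (k:ℝ) - 1) * Real.exp (-(x * t)))) (Set.Ioo (0:ℝ) 1) :=
    MeasureTheory.integrable_finset_sum _ fun k _ =>
      (Iv_integrable α δ x hα hδ₁ hδ₂ hx
        (le_add_of_nonneg_right (Nat.cast_nonneg k))).const_mul _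
  have hNint : IntegrableOn (fun t : ℝ => t ^ (α - 1) * (1 - t) ^ δ * Real.exp (-(x * t)))
      (Set.Ioo (0:ℝ) 1) := by
    have := NI_integrable α δ x hα hδ₁ hδ₂ hx 0
    simpa using this
  rw [NKummer_eq, ← sum_swap α δ x hα hδ₁ hδ₂ hx (m + 1),
    ← MeasureTheory.integral_add hsumint (NI_integrable α δ x hα hδ₁ hδ₂ hx m)]
  apply setIntegral_mono_on hNint (hsumint.add (NI_integrable α δ x hα hδ₁ hδ₂ hx m))
    measurableSet_Ioo
  intro t ht
  have ht0 := ht.1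
  have hrb := remainder_bound δ hδ₁ hδ₂ m ht0.le ht.2.le
  have hfac : (0:ℝ) ≤ t ^ (α - 1) * Real.exp (-(x * t)) := by positivity
  have := mul_le_mul_of_nonneg_left hrb hfac
  calc t ^ (α - 1) * (1 - t) ^ δ * Real.exp (-(x * t))
      = (t ^ (α - 1) * Real.exp (-(x * t))) * (1 - t) ^ δ := by ring
    _ ≤ (t ^ (α - 1) * Real.exp (-(x * t)))
        * ((∑ k ∈ Finset.range (m + 1), pc (-δ) k * t ^ k) + t ^ m * (1 - t) ^ δ) := this
    _ = (∑ k ∈ Finset.range (m + 1),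
          pc (-δ) k * (t ^ (α + (k:ℝ) - 1) * Real.exp (-(x * t))))
        + t ^ m * (t ^ (α - 1) * (1 - t) ^ δ * Real.exp (-(x * t))) := by
        rw [mul_add, Finset.mul_sum]
        congr 1
        · refine Finset.sum_congr rfl fun k _ => ?_
          rw [term_factor α ht0 k]
          ring
        · ring

lemma J_tendsto (hα : 0 < α) (hδ₁ : -1 < δ) (hδ₂ : δ < 0) (hx : 0 < x) :
    Tendsto (fun m : ℕ => ∫ t in Set.Ioo (0:ℝ) 1,
      t ^ m * (t ^ (α - 1) * (1 - t) ^ δ * Real.exp (-(x * t)))) atTop (nhds 0) := by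
  have key := MeasureTheory.tendsto_integral_of_dominated_convergence
    (μ := volume.restrict (Set.Ioo (0:ℝ) 1))
    (F := fun (m : ℕ) (t : ℝ) => t ^ m * (t ^ (α - 1) * (1 - t) ^ δ * Real.exp (-(x * t))))
    (f := fun _ => (0:ℝ))
    (bound := fun t : ℝ => t ^ (α - 1) * (1 - t) ^ δ)
    (fun m => (((continuous_pow m).continuousOn).mul (NI_contOn α δ x)).aestronglyMeasurable
      measurableSet_Ioo)
    (h_integrable α δ hα hδ₁)
    (fun m => by
      rw [ae_restrict_iff' measurableSet_Ioo]
      apply ae_of_all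
      intro t ht
      have ht0 := ht.1; have ht1 := ht.2
      have h1t : (0:ℝ) ≤ 1 - t := by linarith
      rw [Real.norm_eq_abs, abs_of_nonneg (by positivity)]
      have hb : t ^ m * Real.exp (-(x * t)) ≤ 1 :=
        mul_le_one₀ (pow_le_one₀ ht0.le ht1.le) (Real.exp_nonneg _) (exp_le_one' hx.le ht0.le)
      calc t ^ m * (t ^ (α - 1) * (1 - t) ^ δ * Real.exp (-(x * t)))
          = (t ^ m * Real.exp (-(x * t))) * (t ^ (α - 1) * (1 - t) ^ δ) := by ring
        _ ≤ 1 * (t ^ (α - 1) * (1 - t) ^ δ) :=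
            mul_le_mul_of_nonneg_right hb (by positivity)
        _ = t ^ (α - 1) * (1 - t) ^ δ := one_mul _)
    (by
      rw [ae_restrict_iff' measurableSet_Ioo]
      apply ae_of_all
      intro t ht
      have := (tendsto_pow_atTop_nhds_zero_of_lt_one ht.1.le ht.2).mul_const
        (t ^ (α - 1) * (1 - t) ^ δ * Real.exp (-(x * t)))
      simpa using this)
  simpa using key

end P3

section P4
variable (α δ x : ℝ)

noncomputable def sg (α δ : ℝ) (j : ℕ) : ℝ :=
  pc (-δ) j * (1 / (δ + 1) - (α + δ + 1) / (((j:ℝ) + 1) * (α + (j:ℝ) + 1)))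

lemma sg_nonneg (hα : 0 < α) (hδ₁ : -1 < δ) (hδ₂ : δ < 0) (j : ℕ) : 0 ≤ sg α δ j := by
  have hpc : 0 < pc (-δ) j := pc_pos (by linarith) j
  apply mul_nonneg hpc.le
  rw [sub_nonneg, div_le_div_iff₀ (by positivity) (by linarith)]
  have hj : (0:ℝ) ≤ (j:ℝ) := Nat.cast_nonneg j
  nlinarith

lemma sg_step (hα : 0 < α) (hδ₁ : -1 < δ) (hδ₂ : δ < 0) (j : ℕ) :
    pc (-δ) (j + 1) / (α + ((j:ℕ):ℝ) + 1) ≤ sg α δ j - sg α δ (j + 1) := by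
  have hpc : 0 < pc (-δ) j := pc_pos (by linarith) j
  have hj : (0:ℝ) ≤ (j:ℝ) := Nat.cast_nonneg j
  have key : sg α δ j - sg α δ (j + 1) - pc (-δ) (j + 1) / (α + (j:ℝ) + 1)
      = pc (-δ) j * (((j:ℝ) + 1 - (δ + 1)) * (α + δ + 1))
        / ((((j:ℝ) + 1) * ((j:ℝ) + 2)) * (α + (j:ℝ) + 2)) := by
    rw [sg, sg, pc_succ]
    push_cast
    have h1 : (δ:ℝ) + 1 ≠ 0 := by linarith
    have h2 : ((j:ℝ) + 1) ≠ 0 := by positivity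
    have h3 : (α + (j:ℝ) + 1) ≠ 0 := by positivity
    have h4 : ((j:ℝ) + 2) ≠ 0 := by positivity
    have h5 : (α + (j:ℝ) + 2) ≠ 0 := by positivity
    have h6 : (α + ((j:ℝ) + 1) + 1) = α + (j:ℝ) + 2 := by ring
    rw [h6]
    field_simp
    ring
  have hpos : 0 ≤ pc (-δ) j * (((j:ℝ) + 1 - (δ + 1)) * (α + δ + 1))
      / ((((j:ℝ) + 1) * ((j:ℝ) + 2)) * (α + (j:ℝ) + 2)) := by
    have hnum : (0:ℝ) ≤ ((j:ℝ) + 1 - (δ + 1)) * (α + δ + 1) := by nlinarith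
    positivity
  linarith [key, hpos]

lemma sum_Ico_le (hα : 0 < α) (hδ₁ : -1 < δ) (hδ₂ : δ < 0) (p : ℕ) :
    ∀ M : ℕ, ∑ k ∈ Finset.Ico (p + 1) (p + 1 + M), pc (-δ) k / (α + (k:ℝ))
      ≤ sg α δ p - sg α δ (p + M) := by
  intro M
  induction M with
  | zero => simp
  | succ M ih =>
    have hle : p + 1 ≤ p + 1 + M := by omega
    have hre : p + 1 + (M + 1) = (p + 1 + M) + 1 := by omega
    rw [hre, Finset.sum_Ico_succ_top hle]
    have hstep := sg_step α δ hα hδ₁ hδ₂ (p + M)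
    have hidx : p + 1 + M = (p + M) + 1 := by omega
    rw [hidx]
    have hcast : (α + (((p + M + 1):ℕ):ℝ)) = α + ((((p+M)):ℕ):ℝ) + 1 := by push_cast; ring
    have hidx2 : p + (M + 1) = (p + M) + 1 := by omega
    rw [hidx2]
    calc (∑ k ∈ Finset.Ico (p + 1) (p + M + 1), pc (-δ) k / (α + (k:ℝ)))
          + pc (-δ) (p + M + 1) / (α + (((p + M + 1):ℕ):ℝ))
        ≤ (sg α δ p - sg α δ (p + M)) + (sg α δ (p + M) - sg α δ ((p + M) + 1)) := by
          apply add_le_add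
          · have := ih
            rw [show p + 1 + M = p + M + 1 by omega] at this
            exact this
          · rw [hcast]
            exact hstep
      _ = sg α δ p - sg α δ ((p + M) + 1) := by ring

lemma Iv_step (hα : 0 < α) (hδ₁ : -1 < δ) (hδ₂ : δ < 0) (hx : 0 < x)
    {ν : ℝ} (hν : 1 ≤ ν) (hαν : α ≤ ν) :
    (ν + 1) * Iv x (ν + 1) ≤ ν * Iv x ν := by
  have h1 := Iv_ftc x hx hν
  have h2 := Iv_ftc x hx (by linarith : (1:ℝ) ≤ ν + 1)
  have h3 : Iv x (ν + 1 + 1) ≤ Iv x (ν + 1) :=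
    Iv_anti α δ x hα hδ₁ hδ₂ hx (by linarith) (by linarith)
  nlinarith [hx.le, h3]

lemma Iv_chain (hα : 0 < α) (hδ₁ : -1 < δ) (hδ₂ : δ < 0) (hx : 0 < x)
    {ν : ℝ} (hν : 1 ≤ ν) (hαν : α ≤ ν) :
    ∀ j : ℕ, (ν + (j:ℝ)) * Iv x (ν + (j:ℝ)) ≤ ν * Iv x ν := by
  intro j
  induction j with
  | zero => simp
  | succ j ih =>
    have h1 : ν + ((j:ℝ) + 1) = (ν + (j:ℝ)) + 1 := by ring
    have h2 := Iv_step α δ x hα hδ₁ hδ₂ hx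
      (by linarith [Nat.cast_nonneg (α := ℝ) j] : (1:ℝ) ≤ ν + (j:ℝ))
      (by linarith [Nat.cast_nonneg (α := ℝ) j])
    push_cast
    rw [h1]
    exact le_trans h2 ih

end P4

lemma pc_def (μ : ℝ) (k : ℕ) : poch μ k / (k.factorial : ℝ) = pc μ k := rfl

theorem kummer_gamma_bounds_neg_delta
    (δ : ℝ) (hδ₁ : -1 < δ) (hδ₂ : δ < 0) (α : ℝ) (hα : 0 < α) (n : ℕ) (hn : 1 ≤ n)
    (x : ℝ) (hx : 0 < x) :
    (∑ k ∈ Finset.range n,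
        poch (-δ) k / (k.factorial : ℝ) * (lincGamma (α + k) x / x ^ (α + (k:ℝ)))) +
      poch (-δ) n / (n.factorial : ℝ) * (lincGamma (α + n) x / x ^ (α + (n:ℝ)))
      ≤ NKummer α δ x ∧
    NKummer α δ x ≤
      (∑ k ∈ Finset.range n,
        poch (-δ) k / (k.factorial : ℝ) * (lincGamma (α + k) x / x ^ (α + (k:ℝ)))) +
      (poch (-δ) (n - 1) / ((n - 1).factorial : ℝ) *
          ((α + n) / (δ + 1) - (α + δ + 1) / n)) *
        (lincGamma (α + n) x / x ^ (α + (n:ℝ))) := by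
  obtain ⟨p, rfl⟩ : ∃ p, n = p + 1 := ⟨n - 1, by omega⟩
  have hθ : (0:ℝ) < δ + 1 := by linarith
  have hG : ∀ k : ℕ, lincGamma (α + (k:ℝ)) x / x ^ (α + (k:ℝ)) = Iv x (α + (k:ℝ)) :=
    fun k => lincGamma_eq x hx (by positivity)
  simp only [hG, pc_def, Nat.add_sub_cancel]
  constructor
  · -- lower bound
    have hl := lower_int α δ x hα hδ₁ hδ₂ hx (p + 2)
    rw [Finset.sum_range_succ] at hl
    exact hl
  · -- upper bound
    set B : ℝ := ∑ k ∈ Finset.range (p + 1), pc (-δ) k * Iv x (α + (k:ℝ)) with hB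
    set ν : ℝ := α + (((p + 1):ℕ):ℝ) with hν
    have hν1 : (1:ℝ) ≤ ν := by rw [hν]; push_cast; linarith [Nat.cast_nonneg (α := ℝ) p]
    have hνα : α ≤ ν := by rw [hν]; push_cast; linarith [Nat.cast_nonneg (α := ℝ) p]
    have hνpos : (0:ℝ) < ν := by linarith
    have hSid : pc (-δ) p * ((α + (((p+1):ℕ):ℝ)) / (δ + 1) - (α + δ + 1) / (((p+1):ℕ):ℝ))
        = ν * sg α δ p := by
      rw [sg, hν]
      push_cast
      have h2 : ((p:ℝ) + 1) ≠ 0 := by positivity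
      have h3 : (α + (p:ℝ) + 1) ≠ 0 := by positivity
      field_simp
      ring
    set T : ℝ := ν * sg α δ p * Iv x ν with hT
    have key : ∀ m : ℕ, p + 1 ≤ m → NKummer α δ x ≤ B + T
        + ∫ t in Set.Ioo (0:ℝ) 1, t ^ m * (t ^ (α - 1) * (1 - t) ^ δ * Real.exp (-(x * t))) := by
      intro m hm
      have hup := upper_int α δ x hα hδ₁ hδ₂ hx m
      have hsplit : ∑ k ∈ Finset.range (m + 1), pc (-δ) k * Iv x (α + (k:ℝ))
          = B + ∑ k ∈ Finset.Ico (p + 1) (m + 1), pc (-δ) k * Iv x (α + (k:ℝ)) := by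
        simp only [hB, Finset.range_eq_Ico]
        exact (Finset.sum_Ico_consecutive _ (by omega) (by omega)).symm
      have hmid : ∑ k ∈ Finset.Ico (p + 1) (m + 1), pc (-δ) k * Iv x (α + (k:ℝ)) ≤ T := by
        have hterm : ∀ k ∈ Finset.Ico (p + 1) (m + 1),
            pc (-δ) k * Iv x (α + (k:ℝ))
              ≤ pc (-δ) k / (α + (k:ℝ)) * (ν * Iv x ν) := by
          intro k hk
          rw [Finset.mem_Ico] at hk
          have hαk : (0:ℝ) < α + (k:ℝ) := by positivity
          have hrw : α + (k:ℝ) = ν + (((k - (p+1)):ℕ):ℝ) := by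
            rw [hν, Nat.cast_sub hk.1]
            push_cast
            ring
          have hIvk : (α + (k:ℝ)) * Iv x (α + (k:ℝ)) ≤ ν * Iv x ν := by
            rw [hrw]
            exact Iv_chain α δ x hα hδ₁ hδ₂ hx hν1 hνα _
          have hid : pc (-δ) k * Iv x (α + (k:ℝ))
              = pc (-δ) k / (α + (k:ℝ)) * ((α + (k:ℝ)) * Iv x (α + (k:ℝ))) := by
            field_simp
          rw [hid]
          apply mul_le_mul_of_nonneg_left hIvk
          have := pc_pos (show (0:ℝ) < -δ by linarith) k
          positivity
        calc ∑ k ∈ Finset.Ico (p + 1) (m + 1), pc (-δ) k * Iv x (α + (k:ℝ))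
            ≤ ∑ k ∈ Finset.Ico (p + 1) (m + 1), pc (-δ) k / (α + (k:ℝ)) * (ν * Iv x ν) :=
              Finset.sum_le_sum hterm
          _ = (∑ k ∈ Finset.Ico (p + 1) (m + 1), pc (-δ) k / (α + (k:ℝ))) * (ν * Iv x ν) :=
              (Finset.sum_mul _ _ _).symm
          _ ≤ sg α δ p * (ν * Iv x ν) := by
              apply mul_le_mul_of_nonneg_right
              · have hs := sum_Ico_le α δ hα hδ₁ hδ₂ p (m - p)
                rw [show p + 1 + (m - p) = m + 1 by omega] at hs
                have := sg_nonneg α δ hα hδ₁ hδ₂ (p + (m - p))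
                linarith
              · exact mul_nonneg hνpos.le (Iv_nonneg x ν)
          _ = T := by rw [hT]; ring
      calc NKummer α δ x ≤ (∑ k ∈ Finset.range (m + 1), pc (-δ) k * Iv x (α + (k:ℝ)))
            + ∫ t in Set.Ioo (0:ℝ) 1, t ^ m * (t ^ (α-1) * (1-t) ^ δ * Real.exp (-(x*t))) := hup
        _ ≤ B + T + ∫ t in Set.Ioo (0:ℝ) 1,
              t ^ m * (t ^ (α-1) * (1-t) ^ δ * Real.exp (-(x*t))) := by
            rw [hsplit]
            linarith [hmid]
    have htend := J_tendsto α δ x hα hδ₁ hδ₂ hx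
    have hfin : NKummer α δ x - (B + T) ≤ 0 := by
      apply ge_of_tendsto htend
      rw [eventually_atTop]
      exact ⟨p + 1, fun m hm => by linarith [key m hm]⟩
    have hgoal : pc (-δ) p * ((α + (((p+1):ℕ):ℝ)) / (δ + 1) - (α + δ + 1) / (((p+1):ℕ):ℝ))
        * Iv x (α + (((p+1):ℕ):ℝ)) = T := by
      rw [hT, hSid, hν]
    calc NKummer α δ x ≤ B + T := by linarith
      _ = B + pc (-δ) p * ((α + (((p+1):ℕ):ℝ)) / (δ + 1) - (α + δ + 1) / (((p+1):ℕ):ℝ))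
          * Iv x (α + (((p+1):ℕ):ℝ)) := by rw [hgoal]
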